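/- arXiv:1610.05879 — 6 statements merged into one kernel-verified Lean document; each statement's English description precedes it below -/
import Mathlib

section
/- For all x̂ ∈ 𝕊¹ one has |w_ℓ(x̂)| = |w(x̂)| if and only if for all x̂ ∈ 𝕊¹ one has Re(e^{ik⟨ℓ, d₁ - d₂⟩} · v₁(x̂) · conj(v₂(x̂))) = Re(v₁(x̂) · conj(v₂(x̂))). (This is the key equivalence (2.4) in the proof of Theorem 2.2.) -/
open Complex RealInnerProductSpace

lemma aux_normSq_exp (θ : ℝ) : Complex.normSq (Complex.exp (Complex.I * θ)) = 1 := by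
  have h1 : ‖Complex.exp (Complex.I * θ)‖ = 1 := by
    rw [mul_comm, Complex.norm_exp_ofReal_mul_I]
  have h := Complex.sq_norm (Complex.exp (Complex.I * θ))
  rw [h1] at h
  simpa using h.symm

lemma aux_key (θ : ℝ) (a b : ℂ) :
    ‖Complex.exp (Complex.I * θ) * a + b‖ = ‖a + b‖ ↔
    (Complex.exp (Complex.I * θ) * (a * (starRingEnd ℂ) b)).re = (a * (starRingEnd ℂ) b).re := by
  rw [Complex.norm_def, Complex.norm_def,
    Real.sqrt_inj (Complex.normSq_nonneg _) (Complex.normSq_nonneg _),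
    Complex.normSq_add, Complex.normSq_add, Complex.normSq_mul, aux_normSq_exp, one_mul,
    mul_assoc]
  constructor <;> intro h <;> linarith

/-- The key equivalence (2.4) in the proof of Theorem 2.2:
`|w_ℓ(x̂)| = |w(x̂)|` for all `x̂ ∈ 𝕊¹` iff
`Re(e^{ik⟨ℓ,d₁-d₂⟩} v₁(x̂) conj(v₂(x̂))) = Re(v₁(x̂) conj(v₂(x̂)))` for all `x̂ ∈ 𝕊¹`. -/
theorem stmt_0
    (k : ℝ) (hk : 0 < k)
    (d₁ d₂ ℓ : EuclideanSpace ℝ (Fin 2))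
    (hd₁ : ‖d₁‖ = 1) (hd₂ : ‖d₂‖ = 1) (hne : d₁ ≠ d₂)
    (v₁ v₂ : EuclideanSpace ℝ (Fin 2) → ℂ) :
    (∀ x : EuclideanSpace ℝ (Fin 2), ‖x‖ = 1 →
        ‖Complex.exp (Complex.I * (k * ⟪ℓ, d₁ - x⟫)) * v₁ x
            + Complex.exp (Complex.I * (k * ⟪ℓ, d₂ - x⟫)) * v₂ x‖
          = ‖v₁ x + v₂ x‖) ↔
    (∀ x : EuclideanSpace ℝ (Fin 2), ‖x‖ = 1 →
        (Complex.exp (Complex.I * (k * ⟪ℓ, d₁ - d₂⟫))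
            * (v₁ x * (starRingEnd ℂ) (v₂ x))).re
          = (v₁ x * (starRingEnd ℂ) (v₂ x)).re) := by
  have key : ∀ x : EuclideanSpace ℝ (Fin 2),
      ‖Complex.exp (Complex.I * (k * ⟪ℓ, d₁ - x⟫)) * v₁ x
          + Complex.exp (Complex.I * (k * ⟪ℓ, d₂ - x⟫)) * v₂ x‖
        = ‖Complex.exp (Complex.I * (k * ⟪ℓ, d₁ - d₂⟫)) * v₁ x + v₂ x‖ := by
    intro x
    have hip : (⟪ℓ, d₁ - x⟫ : ℝ) = ⟪ℓ, d₂ - x⟫ + ⟪ℓ, d₁ - d₂⟫ := by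
      simp only [inner_sub_right]; ring
    have hfact : Complex.exp (Complex.I * (k * ⟪ℓ, d₁ - x⟫)) * v₁ x
          + Complex.exp (Complex.I * (k * ⟪ℓ, d₂ - x⟫)) * v₂ x
        = Complex.exp (Complex.I * (k * ⟪ℓ, d₂ - x⟫))
          * (Complex.exp (Complex.I * (k * ⟪ℓ, d₁ - d₂⟫)) * v₁ x + v₂ x) := by
      have : (Complex.I * (k * ⟪ℓ, d₁ - x⟫) : ℂ)
          = Complex.I * (k * ⟪ℓ, d₂ - x⟫) + Complex.I * (k * ⟪ℓ, d₁ - d₂⟫) := by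
        rw [hip]; push_cast; ring
      rw [this, Complex.exp_add]; ring
    have habs : ‖Complex.exp (Complex.I * (k * ⟪ℓ, d₂ - x⟫))‖ = 1 := by
      have : (Complex.I * (k * ⟪ℓ, d₂ - x⟫) : ℂ) = ((k * ⟪ℓ, d₂ - x⟫ : ℝ) : ℂ) * Complex.I := by
        push_cast; ring
      rw [this, Complex.norm_exp_ofReal_mul_I]
    rw [hfact, norm_mul, habs, one_mul]
  have cast1 : ∀ x : EuclideanSpace ℝ (Fin 2),
      (Complex.I * (k * ⟪ℓ, d₁ - d₂⟫) : ℂ) = Complex.I * ((k * ⟪ℓ, d₁ - d₂⟫ : ℝ) : ℂ) := by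
    intro x; push_cast; ring
  constructor <;> intro h x hx <;> have h' := h x hx
  · rw [key x] at h'
    rw [cast1 x] at h' ⊢
    exact (aux_key _ _ _).1 h'
  · rw [key x]
    rw [cast1 x] at h' ⊢
    exact (aux_key _ _ _).2 h'
end

section
/- If k⟨ℓ, d₁ - d₂⟩ = 2πn for some integer n, then |w_ℓ(x̂)| = |w(x̂)| for all x̂ ∈ 𝕊¹. (Sufficiency part of Theorem 2.2: the phaseless far-field pattern is invariant under such translations ℓ.) -/
open Complex RealInnerProductSpace

/-- Sufficiency part of Theorem 2.2: if `k⟨ℓ, d₁ - d₂⟩ = 2πn` for some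
integer `n`, then `|w_ℓ(x̂)| = |w(x̂)|` for all `x̂ ∈ 𝕊¹`. -/
theorem stmt_1
    (k : ℝ) (hk : 0 < k)
    (d₁ d₂ ℓ : EuclideanSpace ℝ (Fin 2))
    (hd₁ : ‖d₁‖ = 1) (hd₂ : ‖d₂‖ = 1) (hne : d₁ ≠ d₂)
    (v₁ v₂ : EuclideanSpace ℝ (Fin 2) → ℂ)
    (hℓ : ∃ n : ℤ, k * ⟪ℓ, d₁ - d₂⟫ = 2 * Real.pi * n) :
    ∀ x : EuclideanSpace ℝ (Fin 2), ‖x‖ = 1 →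
      ‖Complex.exp (Complex.I * (k * ⟪ℓ, d₁ - x⟫)) * v₁ x
          + Complex.exp (Complex.I * (k * ⟪ℓ, d₂ - x⟫)) * v₂ x‖
        = ‖v₁ x + v₂ x‖ := by
  obtain ⟨n, hn⟩ := hℓ
  intro x hx
  have key : Complex.exp (Complex.I * (k * ⟪ℓ, d₂ - x⟫))
      = Complex.exp (Complex.I * (k * ⟪ℓ, d₁ - x⟫)) := by
    rw [Complex.exp_eq_exp_iff_exists_int]
    refine ⟨-n, ?_⟩
    have h1 : ⟪ℓ, d₁ - x⟫ - ⟪ℓ, d₂ - x⟫ = ⟪ℓ, d₁ - d₂⟫ := by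
      rw [inner_sub_right, inner_sub_right, inner_sub_right]; ring
    have h2 : k * ⟪ℓ, d₁ - x⟫ - k * ⟪ℓ, d₂ - x⟫ = 2 * Real.pi * n := by
      rw [← hn, ← h1]; ring
    have h3 : (k * ⟪ℓ, d₁ - x⟫ : ℂ) - (k * ⟪ℓ, d₂ - x⟫ : ℂ) = 2 * Real.pi * n := by
      push_cast
      exact_mod_cast congrArg (Complex.ofReal) h2
    push_cast
    rw [show Complex.I * (↑k * ↑⟪ℓ, d₁ - x⟫) + -↑n * (2 * ↑Real.pi * Complex.I)
        = Complex.I * ((↑k * ↑⟪ℓ, d₁ - x⟫) - (2 * ↑Real.pi * ↑n)) by ring, ← h3]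
    ring
  rw [key, ← mul_add, norm_mul, Complex.norm_exp]
  simp [Complex.mul_re]
end

section
/- Let n ∈ ℝ² be a unit vector with ⟨n, d₁ - d₂⟩ = 0. Then for every a ∈ ℝ and every integer m, the translation vector ℓ = a·n + (2πm/(k‖d₁ - d₂‖²))·(d₁ - d₂) satisfies |w_ℓ(x̂)| = |w(x̂)| for all x̂ ∈ 𝕊¹. (Theorem 2.2: the phaseless far-field pattern is invariant for translations ℓ = ℓ_m along these countably many parallel lines.) -/
open Complex RealInnerProductSpace

/-- Theorem 2.2: for a unit vector `n` with `⟨n, d₁ - d₂⟩ = 0`, every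
translation `ℓ = a n + (2πm/(k‖d₁-d₂‖²))(d₁-d₂)` with `a ∈ ℝ`, `m ∈ ℤ` leaves the
phaseless far-field pattern invariant: `|w_ℓ(x̂)| = |w(x̂)|` for all `x̂ ∈ 𝕊¹`. -/
theorem stmt_2
    (k : ℝ) (hk : 0 < k)
    (d₁ d₂ : EuclideanSpace ℝ (Fin 2))
    (hd₁ : ‖d₁‖ = 1) (hd₂ : ‖d₂‖ = 1) (hne : d₁ ≠ d₂)
    (n : EuclideanSpace ℝ (Fin 2)) (hn : ‖n‖ = 1) (hperp : ⟪n, d₁ - d₂⟫ = 0)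
    (v₁ v₂ : EuclideanSpace ℝ (Fin 2) → ℂ) :
    ∀ (a : ℝ) (m : ℤ),
      ∀ x : EuclideanSpace ℝ (Fin 2), ‖x‖ = 1 →
        ‖(Complex.exp (Complex.I *
                (k * ⟪a • n + ((2 * Real.pi * m) / (k * ‖d₁ - d₂‖ ^ 2)) • (d₁ - d₂),
                  d₁ - x⟫)) * v₁ x
              + Complex.exp (Complex.I *
                (k * ⟪a • n + ((2 * Real.pi * m) / (k * ‖d₁ - d₂‖ ^ 2)) • (d₁ - d₂),
                  d₂ - x⟫)) * v₂ x)‖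
          = ‖v₁ x + v₂ x‖ := by
  intro a m x hx
  set ℓ := a • n + ((2 * Real.pi * m) / (k * ‖d₁ - d₂‖ ^ 2)) • (d₁ - d₂) with hℓ
  have hnorm : ‖d₁ - d₂‖ ≠ 0 := by
    simp [sub_eq_zero, hne]
  have hdiff : k * ⟪ℓ, d₁ - d₂⟫ = 2 * Real.pi * m := by
    rw [hℓ, inner_add_left, real_inner_smul_left, real_inner_smul_left, hperp,
      real_inner_self_eq_norm_sq]
    field_simp
    ring
  have hc : (k : ℝ) * ⟪ℓ, d₁ - x⟫ = k * ⟪ℓ, d₂ - x⟫ + 2 * Real.pi * m := by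
    have : ⟪ℓ, d₁ - x⟫ = ⟪ℓ, d₂ - x⟫ + ⟪ℓ, d₁ - d₂⟫ := by
      rw [← inner_add_right]; congr 1; abel
    rw [this, mul_add, hdiff]
  have hexp : Complex.exp (Complex.I * ((k : ℂ) * ((⟪ℓ, d₁ - x⟫ : ℝ) : ℂ)))
      = Complex.exp (Complex.I * ((k : ℂ) * ((⟪ℓ, d₂ - x⟫ : ℝ) : ℂ))) := by
    have hcC : ((k : ℂ) * ((⟪ℓ, d₁ - x⟫ : ℝ) : ℂ))
        = (k : ℂ) * ((⟪ℓ, d₂ - x⟫ : ℝ) : ℂ) + 2 * (Real.pi : ℂ) * (m : ℂ) := by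
      exact_mod_cast hc
    rw [hcC, mul_add, Complex.exp_add,
      show Complex.I * (2 * (Real.pi : ℂ) * (m : ℂ)) = (m : ℂ) * (2 * Real.pi * Complex.I) by ring,
      Complex.exp_int_mul_two_pi_mul_I, mul_one]
  rw [hexp, ← mul_add, norm_mul, Complex.norm_exp]
  have : (Complex.I * (k * ⟪ℓ, d₂ - x⟫)).re = 0 := by
    simp [Complex.mul_re]
  rw [this, Real.exp_zero, one_mul]
end

section
/- Suppose there is a point x̂₀ ∈ 𝕊¹ with v₁(x̂₀)·conj(v₂(x̂₀)) ≠ 0, and let θ₀ be the argument of the complex number v₁(x̂₀)·conj(v₂(x̂₀)). If |w_ℓ(x̂)| = |w(x̂)| for all x̂ ∈ 𝕊¹, then there exists an integer n such that k⟨ℓ, d₁ - d₂⟩ = 2πn or k⟨ℓ, d₁ - d₂⟩ = 2πn - 2θ₀. (Necessity part of Theorem 2.2: apart from the lattice of lines ℓ_n, at most one further family ℓ_{nτ} with τ ∈ (0, 2π) can leave the phaseless far-field pattern invariant.) -/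
open Complex RealInnerProductSpace

/-- Necessity part of Theorem 2.2: if `v₁(x̂₀) conj(v₂(x̂₀)) ≠ 0` for some
`x̂₀ ∈ 𝕊¹` with argument `θ₀`, and `|w_ℓ(x̂)| = |w(x̂)|` for all `x̂ ∈ 𝕊¹`, then there is an
integer `n` with `k⟨ℓ, d₁-d₂⟩ = 2πn` or `k⟨ℓ, d₁-d₂⟩ = 2πn - 2θ₀`. -/
theorem stmt_3
    (k : ℝ) (hk : 0 < k)
    (d₁ d₂ ℓ : EuclideanSpace ℝ (Fin 2))
    (hd₁ : ‖d₁‖ = 1) (hd₂ : ‖d₂‖ = 1) (hne : d₁ ≠ d₂)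
    (v₁ v₂ : EuclideanSpace ℝ (Fin 2) → ℂ)
    (x₀ : EuclideanSpace ℝ (Fin 2)) (hx₀ : ‖x₀‖ = 1)
    (hv : v₁ x₀ * (starRingEnd ℂ) (v₂ x₀) ≠ 0)
    (θ₀ : ℝ) (hθ₀ : θ₀ = Complex.arg (v₁ x₀ * (starRingEnd ℂ) (v₂ x₀)))
    (hinv : ∀ x : EuclideanSpace ℝ (Fin 2), ‖x‖ = 1 →
      ‖Complex.exp (Complex.I * (k * ⟪ℓ, d₁ - x⟫)) * v₁ x
          + Complex.exp (Complex.I * (k * ⟪ℓ, d₂ - x⟫)) * v₂ x‖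
        = ‖v₁ x + v₂ x‖) :
    ∃ n : ℤ, k * ⟪ℓ, d₁ - d₂⟫ = 2 * Real.pi * n
      ∨ k * ⟪ℓ, d₁ - d₂⟫ = 2 * Real.pi * n - 2 * θ₀ := by
  set β : ℝ := k * ⟪ℓ, d₁ - d₂⟫ with hβ
  set z : ℂ := v₁ x₀ * (starRingEnd ℂ) (v₂ x₀) with hz
  have key := hinv x₀ hx₀
  have hinner : ⟪ℓ, d₁ - x₀⟫ = ⟪ℓ, d₂ - x₀⟫ + ⟪ℓ, d₁ - d₂⟫ := by
    rw [← inner_add_right]; congr 1; abel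
  have e : (Complex.I * ((k : ℂ) * ((⟪ℓ, d₁ - x₀⟫ : ℝ) : ℂ)))
      = Complex.I * ((k : ℂ) * ((⟪ℓ, d₂ - x₀⟫ : ℝ) : ℂ)) + Complex.I * (β : ℂ) := by
    rw [hinner, hβ]; push_cast; ring
  have hsplit : Complex.exp (Complex.I * (k * ⟪ℓ, d₁ - x₀⟫)) * v₁ x₀
      + Complex.exp (Complex.I * (k * ⟪ℓ, d₂ - x₀⟫)) * v₂ x₀
      = Complex.exp (Complex.I * (k * ⟪ℓ, d₂ - x₀⟫)) *
        (Complex.exp (Complex.I * β) * v₁ x₀ + v₂ x₀) := by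
    rw [e, Complex.exp_add]; ring
  have habs1 : ∀ t : ℝ, ‖Complex.exp (Complex.I * (t : ℂ))‖ = 1 := by
    intro t; rw [Complex.norm_exp]; simp
  have key2 : ‖Complex.exp (Complex.I * (β : ℂ)) * v₁ x₀ + v₂ x₀‖
      = ‖v₁ x₀ + v₂ x₀‖ := by
    have h0 : ‖Complex.exp (Complex.I * ((k:ℂ) * ((⟪ℓ, d₂ - x₀⟫ : ℝ) : ℂ)))‖ = 1 := by
      rw [Complex.norm_exp]; simp
    rw [hsplit, norm_mul, h0, one_mul] at key
    exact key
  have hns : Complex.normSq (Complex.exp (Complex.I * (β : ℂ)) * v₁ x₀ + v₂ x₀)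
      = Complex.normSq (v₁ x₀ + v₂ x₀) := by
    rw [← Complex.sq_norm, ← Complex.sq_norm, key2]
  rw [Complex.normSq_add, Complex.normSq_add, Complex.normSq_mul] at hns
  have h1 : Complex.normSq (Complex.exp (Complex.I * (β : ℂ))) = 1 := by
    rw [← Complex.sq_norm, habs1 β]; norm_num
  rw [h1, one_mul, mul_assoc] at hns
  have hre : (Complex.exp (Complex.I * (β : ℂ)) * z).re = z.re := by linarith
  set r : ℝ := ‖z‖ with hr
  have hrpos : (0:ℝ) < r := norm_pos_iff.mpr hv
  have hzeq : z = (r : ℂ) * Complex.exp (θ₀ * Complex.I) := by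
    rw [hθ₀, hr]; exact (Complex.norm_mul_exp_arg_mul_I z).symm
  have e1 : Complex.exp (Complex.I * (β : ℂ)) * z
      = (r : ℂ) * Complex.exp ((↑(β + θ₀)) * Complex.I) := by
    rw [hzeq, show ((↑(β + θ₀) : ℂ)) * Complex.I
        = Complex.I * (β : ℂ) + (θ₀ : ℂ) * Complex.I by push_cast; ring,
      Complex.exp_add]
    ring
  have e2 : ((r : ℂ) * Complex.exp ((↑(β + θ₀)) * Complex.I)).re
      = r * Real.cos (β + θ₀) := by
    rw [Complex.re_ofReal_mul, Complex.exp_ofReal_mul_I_re]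
  have e3 : z.re = r * Real.cos θ₀ := by
    rw [hzeq, Complex.re_ofReal_mul, Complex.exp_ofReal_mul_I_re]
  have hre2 : r * Real.cos (β + θ₀) = r * Real.cos θ₀ := by
    rw [← e2, ← e1, hre, e3]
  have hcos : Real.cos (β + θ₀) = Real.cos θ₀ :=
    mul_left_cancel₀ (ne_of_gt hrpos) hre2
  rw [Real.cos_eq_cos_iff] at hcos
  obtain ⟨n, hn | hn⟩ := hcos
  · exact ⟨-n, Or.inl (by push_cast at hn ⊢; linarith)⟩
  · exact ⟨n, Or.inr (by push_cast at hn ⊢; linarith)⟩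
end

section
/- If |w_ℓ(x̂)| = |w(x̂)| for all x̂ ∈ 𝕊¹ and e^{ik⟨ℓ, d₁ - d₂⟩} ≠ 1, then for every x̂ ∈ 𝕊¹ one has e^{ik⟨ℓ, d₁ - d₂⟩} · v₁(x̂) · conj(v₂(x̂)) = conj(v₁(x̂) · conj(v₂(x̂))). In particular the phase of v₁·conj(v₂) is the same constant at every point where it does not vanish. (This is the observation of Remark 2.1.) -/
open Complex RealInnerProductSpace

/-- Remark 2.1: if `|w_ℓ(x̂)| = |w(x̂)|` for all `x̂ ∈ 𝕊¹` and
`e^{ik⟨ℓ, d₁-d₂⟩} ≠ 1`, then `e^{ik⟨ℓ, d₁-d₂⟩} v₁(x̂) conj(v₂(x̂)) = conj(v₁(x̂) conj(v₂(x̂)))`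
for every `x̂ ∈ 𝕊¹`. -/
theorem stmt_4
    (k : ℝ) (hk : 0 < k)
    (d₁ d₂ ℓ : EuclideanSpace ℝ (Fin 2))
    (hd₁ : ‖d₁‖ = 1) (hd₂ : ‖d₂‖ = 1) (hne : d₁ ≠ d₂)
    (v₁ v₂ : EuclideanSpace ℝ (Fin 2) → ℂ)
    (hinv : ∀ x : EuclideanSpace ℝ (Fin 2), ‖x‖ = 1 →
      ‖Complex.exp (Complex.I * (k * ⟪ℓ, d₁ - x⟫)) * v₁ x
          + Complex.exp (Complex.I * (k * ⟪ℓ, d₂ - x⟫)) * v₂ x‖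
        = ‖v₁ x + v₂ x‖)
    (hexp : Complex.exp (Complex.I * (k * ⟪ℓ, d₁ - d₂⟫)) ≠ 1) :
    ∀ x : EuclideanSpace ℝ (Fin 2), ‖x‖ = 1 →
      Complex.exp (Complex.I * (k * ⟪ℓ, d₁ - d₂⟫)) * (v₁ x * (starRingEnd ℂ) (v₂ x))
        = (starRingEnd ℂ) (v₁ x * (starRingEnd ℂ) (v₂ x)) := by
  intro x hx
  set E : ℂ := Complex.exp (Complex.I * (k * ⟪ℓ, d₁ - d₂⟫)) with hE
  set a : ℂ := Complex.exp (Complex.I * (k * ⟪ℓ, d₁ - x⟫)) with ha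
  set b : ℂ := Complex.exp (Complex.I * (k * ⟪ℓ, d₂ - x⟫)) with hb
  set z : ℂ := v₁ x * (starRingEnd ℂ) (v₂ x) with hz
  have hEne : E ≠ 0 := Complex.exp_ne_zero _
  have habs : ∀ r : ℝ, ‖Complex.exp (Complex.I * (r : ℂ))‖ = 1 := by
    intro r
    rw [Complex.norm_exp]
    simp
  have hconjE : (starRingEnd ℂ) E = E⁻¹ := by
    rw [hE, ← Complex.exp_conj, ← Complex.exp_neg]
    congr 1
    push_cast
    simp [map_mul, Complex.conj_I]
  have hab : a * (starRingEnd ℂ) b = E := by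
    rw [ha, hb, hE, ← Complex.exp_conj, ← Complex.exp_add]
    congr 1
    have : ⟪ℓ, d₁ - d₂⟫ = ⟪ℓ, d₁ - x⟫ - ⟪ℓ, d₂ - x⟫ := by
      rw [inner_sub_right, inner_sub_right, inner_sub_right]; ring
    rw [this]
    push_cast
    simp [map_mul, Complex.conj_I]
    ring
  have h := hinv x hx
  have hsq : Complex.normSq (a * v₁ x + b * v₂ x) = Complex.normSq (v₁ x + v₂ x) := by
    rw [← Complex.sq_norm, ← Complex.sq_norm, h]
  rw [Complex.normSq_add, Complex.normSq_add, Complex.normSq_mul, Complex.normSq_mul] at hsq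
  have hna : Complex.normSq a = 1 := by
    have := habs (k * ⟪ℓ, d₁ - x⟫)
    rw [← Complex.sq_norm]
    push_cast at this ⊢
    rw [ha]
    rw [this]; norm_num
  have hnb : Complex.normSq b = 1 := by
    have := habs (k * ⟪ℓ, d₂ - x⟫)
    rw [← Complex.sq_norm]
    push_cast at this ⊢
    rw [hb]
    rw [this]; norm_num
  rw [hna, hnb, one_mul, one_mul] at hsq
  have hre : (E * z).re = z.re := by
    have : (a * v₁ x * (starRingEnd ℂ) (b * v₂ x)) = E * z := by
      rw [map_mul, hz]
      rw [← hab]; ring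
    rw [this] at hsq
    linarith
  have h2 : E * z + (starRingEnd ℂ) (E * z) = z + (starRingEnd ℂ) z := by
    have h1 := Complex.add_conj (E * z)
    have h2 := Complex.add_conj z
    rw [h1, h2, hre]
  rw [map_mul, hconjE] at h2
  have key : (E - 1) * (E * z - (starRingEnd ℂ) z) = 0 := by
    have := congrArg (fun w => E * w) h2
    simp only [mul_add] at this
    field_simp at this
    ring_nf
    ring_nf at this
    linear_combination this
  rcases mul_eq_zero.mp key with h | h
  · exact absurd (by linear_combination h) hexp
  · linear_combination h
end

section
/- For l = 1, 2 let d_{1l}, d_{2l} ∈ 𝕊¹ with d_{1l} ≠ d_{2l}, and assume the vectors d_{11} - d_{21} and d_{12} - d_{22} are linearly independent. For l = 1, 2 let v₁^{(l)}, v₂^{(l)} : ℝ² → ℂ be functions such that v₁^{(l)}(x̂_l)·conj(v₂^{(l)}(x̂_l)) ≠ 0 for some point x̂_l ∈ 𝕊¹, and define w^{(l)}(x̂) := v₁^{(l)}(x̂) + v₂^{(l)}(x̂) and, for ℓ ∈ ℝ², w_ℓ^{(l)}(x̂) := e^{ik⟨ℓ, d_{1l} - x̂⟩} v₁^{(l)}(x̂)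 + e^{ik⟨ℓ, d_{2l} - x̂⟩} v₂^{(l)}(x̂). Then the set of translation vectors ℓ ∈ ℝ² satisfying |w_ℓ^{(l)}(x̂)| = |w^{(l)}(x̂)| for all x̂ ∈ 𝕊¹ and for both l = 1 and l = 2 is countable. (Abstract form of Corollary 2.1: with two sets of incident directions whose difference vectors are non-parallel, the phaseless far-field pattern is invariant only for a countable set of translations.) -/
open Complex RealInnerProductSpace

private lemma countable_aux (k φ : ℝ) (hk : k ≠ 0) :
    {s : ℝ | Real.cos (k * s + φ) = Real.cos φ}.Countable := by
  have hsub : {s : ℝ | Real.cos (k * s + φ) = Real.cos φ} ⊆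
      Set.range (fun n : ℤ => 2 * ((n : ℝ) * Real.pi) / k) ∪
      Set.range (fun n : ℤ => 2 * ((n : ℝ) * Real.pi - φ) / k) := by
    intro s hs
    have h0 : Real.cos (k * s + φ) - Real.cos φ = 0 := by
      rw [Set.mem_setOf_eq.mp hs]; ring
    rw [Real.cos_sub_cos] at h0
    rcases mul_eq_zero.1 h0 with h1 | h1
    · rcases mul_eq_zero.1 h1 with h2 | h2
      · norm_num at h2
      · right
        obtain ⟨n, hn⟩ := Real.sin_eq_zero_iff.1 h2
        refine ⟨n, ?_⟩
        have : k * s = 2 * ((n : ℝ) * Real.pi - φ) := by nlinarith [hn]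
        field_simp
        linarith [this]
    · left
      obtain ⟨n, hn⟩ := Real.sin_eq_zero_iff.1 h1
      refine ⟨n, ?_⟩
      have : k * s = 2 * ((n : ℝ) * Real.pi) := by nlinarith [hn]
      field_simp
      linarith [this]
  exact ((Set.countable_range _).union (Set.countable_range _)).mono hsub

/-- Abstract form of Corollary 2.1: with two sets of incident directions whose
difference vectors are linearly independent, and far-field patterns whose product
`v₁^{(l)} conj(v₂^{(l)})` does not vanish identically on `𝕊¹`, the set of translations `ℓ`
leaving both phaseless far-field patterns invariant is countable. -/
theorem stmt_6
    (k : ℝ) (hk : 0 < k)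
    (d₁ d₂ : Fin 2 → EuclideanSpace ℝ (Fin 2))
    (hd₁ : ∀ l, ‖d₁ l‖ = 1) (hd₂ : ∀ l, ‖d₂ l‖ = 1)
    (hne : ∀ l, d₁ l ≠ d₂ l)
    (hind : LinearIndependent ℝ ![d₁ 0 - d₂ 0, d₁ 1 - d₂ 1])
    (v₁ v₂ : Fin 2 → EuclideanSpace ℝ (Fin 2) → ℂ)
    (x₀ : Fin 2 → EuclideanSpace ℝ (Fin 2)) (hx₀ : ∀ l, ‖x₀ l‖ = 1)
    (hv : ∀ l, v₁ l (x₀ l) * (starRingEnd ℂ) (v₂ l (x₀ l)) ≠ 0) :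
    {ℓ : EuclideanSpace ℝ (Fin 2) | ∀ l : Fin 2,
      ∀ x : EuclideanSpace ℝ (Fin 2), ‖x‖ = 1 →
        ‖Complex.exp (Complex.I * (k * ⟪ℓ, d₁ l - x⟫)) * v₁ l x
            + Complex.exp (Complex.I * (k * ⟪ℓ, d₂ l - x⟫)) * v₂ l x‖
          = ‖v₁ l x + v₂ l x‖}.Countable := by
  have hkne : k ≠ 0 := ne_of_gt hk
  set e : Fin 2 → EuclideanSpace ℝ (Fin 2) := fun l => d₁ l - d₂ l with he
  set z : Fin 2 → ℂ := fun l => v₁ l (x₀ l) * (starRingEnd ℂ) (v₂ l (x₀ l)) with hzdef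
  set φ : Fin 2 → ℝ := fun l => Complex.arg (z l) with hφ
  set C : Fin 2 → Set ℝ := fun l => {s : ℝ | Real.cos (k * s + φ l) = Real.cos (φ l)} with hCdef
  have hCc : ∀ l, (C l).Countable := fun l => countable_aux k (φ l) hkne
  -- the injective linear evaluation map
  have hspan : Submodule.span ℝ (Set.range ![d₁ 0 - d₂ 0, d₁ 1 - d₂ 1]) = ⊤ :=
    hind.span_eq_top_of_card_eq_finrank (by simp)
  have hinj : Function.Injective
      (fun ℓ : EuclideanSpace ℝ (Fin 2) => ((⟪ℓ, e 0⟫ : ℝ), (⟪ℓ, e 1⟫ : ℝ))) := by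
    intro a b hab
    simp only [Prod.mk.injEq] at hab
    have hv0 : ∀ l : Fin 2, ⟪a - b, e l⟫ = 0 := by
      intro l
      fin_cases l
      · rw [inner_sub_left, sub_eq_zero]; exact hab.1
      · rw [inner_sub_left, sub_eq_zero]; exact hab.2
    have hall : ∀ u : EuclideanSpace ℝ (Fin 2), ⟪a - b, u⟫ = 0 := by
      intro u
      have hu : u ∈ Submodule.span ℝ (Set.range ![d₁ 0 - d₂ 0, d₁ 1 - d₂ 1]) := by
        rw [hspan]; trivial
      induction hu using Submodule.span_induction with
      | mem x hx =>
        obtain ⟨i, rfl⟩ := hx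
        fin_cases i
        · exact hv0 0
        · exact hv0 1
      | zero => simp
      | add x y _ _ hx hy => rw [inner_add_right, hx, hy, add_zero]
      | smul c x _ hx => rw [real_inner_smul_right, hx, mul_zero]
    have hab0 : a - b = 0 := by
      have h := hall (a - b); rwa [inner_self_eq_zero] at h
    exact sub_eq_zero.1 hab0
  -- key step: membership forces inner products into countable sets
  have hkey : ∀ ℓ ∈ {ℓ : EuclideanSpace ℝ (Fin 2) | ∀ l : Fin 2,
      ∀ x : EuclideanSpace ℝ (Fin 2), ‖x‖ = 1 →
        ‖Complex.exp (Complex.I * (k * ⟪ℓ, d₁ l - x⟫)) * v₁ l x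
            + Complex.exp (Complex.I * (k * ⟪ℓ, d₂ l - x⟫)) * v₂ l x‖
          = ‖v₁ l x + v₂ l x‖}, ∀ l : Fin 2, (⟪ℓ, e l⟫ : ℝ) ∈ C l := by
    intro ℓ hℓ l
    have hz : z l ≠ 0 := hv l
    set a := v₁ l (x₀ l) with ha
    set b := v₂ l (x₀ l) with hb
    have h := hℓ l (x₀ l) (hx₀ l)
    set t : ℝ := k * ⟪ℓ, e l⟫ with ht
    -- factor out the common phase
    have hsplit : Complex.exp (Complex.I * (k * ⟪ℓ, d₁ l - x₀ l⟫)) * a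
        + Complex.exp (Complex.I * (k * ⟪ℓ, d₂ l - x₀ l⟫)) * b
        = Complex.exp (Complex.I * (k * ⟪ℓ, d₂ l - x₀ l⟫))
            * (Complex.exp (Complex.I * t) * a + b) := by
      have hα : Complex.I * ((k : ℂ) * ((⟪ℓ, d₁ l - x₀ l⟫ : ℝ) : ℂ)) =
          Complex.I * ((k : ℂ) * ((⟪ℓ, d₂ l - x₀ l⟫ : ℝ) : ℂ)) + Complex.I * (t : ℂ) := by
        have hip : (⟪ℓ, d₁ l - x₀ l⟫ : ℝ) = ⟪ℓ, d₂ l - x₀ l⟫ + ⟪ℓ, e l⟫ := by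
          simp only [he, inner_sub_right]; ring
        rw [ht, hip]; push_cast; ring
      rw [hα, Complex.exp_add]; ring
    have hA : ‖Complex.exp (Complex.I * t) * a + b‖ = ‖a + b‖ := by
      rw [hsplit, norm_mul, Complex.norm_exp] at h
      simpa using h
    -- pass to real parts
    have hre : (Complex.exp (Complex.I * t) * z l).re = (z l).re := by
      have h2 : Complex.normSq (Complex.exp (Complex.I * t) * a + b) = Complex.normSq (a + b) := by
        rw [← Complex.sq_norm, ← Complex.sq_norm, hA]
      rw [Complex.normSq_add, Complex.normSq_add, Complex.normSq_mul] at h2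
      have h3 : Complex.normSq (Complex.exp (Complex.I * t)) = 1 := by
        rw [Complex.normSq_eq_norm_sq, Complex.norm_exp]; simp
      rw [h3, one_mul] at h2
      have h4 : (Complex.exp (Complex.I * t) * a * (starRingEnd ℂ) b).re
          = (a * (starRingEnd ℂ) b).re := by linarith
      simpa [hzdef, mul_assoc] using h4
    -- polar form
    have hzabs : ‖z l‖ ≠ 0 := by simpa using hz
    have hpolar : (↑‖z l‖ : ℂ) * Complex.exp (↑(Complex.arg (z l)) * Complex.I)
        = z l := Complex.norm_mul_exp_arg_mul_I _
    have hlhs : (Complex.exp (Complex.I * t) * z l).re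
        = ‖z l‖ * Real.cos (t + Complex.arg (z l)) := by
      conv_lhs => rw [← hpolar]
      have hmul : Complex.exp (Complex.I * t)
          * ((↑‖z l‖ : ℂ) * Complex.exp (↑(Complex.arg (z l)) * Complex.I))
          = (↑‖z l‖ : ℂ) * Complex.exp (↑(t + Complex.arg (z l)) * Complex.I) := by
        rw [show ((↑(t + Complex.arg (z l)) : ℂ) * Complex.I)
            = Complex.I * t + ↑(Complex.arg (z l)) * Complex.I by push_cast; ring,
          Complex.exp_add]
        ring
      rw [hmul, Complex.re_ofReal_mul, Complex.exp_ofReal_mul_I_re]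
    have hrhs : (z l).re = ‖z l‖ * Real.cos (Complex.arg (z l)) := by
      rw [Complex.cos_arg hz]
      field_simp
    have hcos : Real.cos (t + Complex.arg (z l)) = Real.cos (Complex.arg (z l)) := by
      apply mul_left_cancel₀ hzabs
      rw [← hlhs, ← hrhs, hre]
    exact hcos
  -- conclude
  have hsub : {ℓ : EuclideanSpace ℝ (Fin 2) | ∀ l : Fin 2,
      ∀ x : EuclideanSpace ℝ (Fin 2), ‖x‖ = 1 →
        ‖Complex.exp (Complex.I * (k * ⟪ℓ, d₁ l - x⟫)) * v₁ l x
            + Complex.exp (Complex.I * (k * ⟪ℓ, d₂ l - x⟫)) * v₂ l x‖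
          = ‖v₁ l x + v₂ l x‖} ⊆
      (fun ℓ : EuclideanSpace ℝ (Fin 2) => ((⟪ℓ, e 0⟫ : ℝ), (⟪ℓ, e 1⟫ : ℝ))) ⁻¹' (C 0 ×ˢ C 1) := by
    intro ℓ hℓ
    exact ⟨hkey ℓ hℓ 0, hkey ℓ hℓ 1⟩
  exact (((hCc 0).prod (hCc 1)).preimage hinj).mono hsub
end
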